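/- With notation as in the bijection construction: Θ(Φ(P)) = P for every G-parking function P; that is, the map Θ defined from spanning trees to parking functions by counting π(T)-smaller outgoing edges is a left inverse of the tree-growing map Φ. -/

import Mathlib

open Finset

open scoped Classical

/-- A subtree of the digraph (with multiplicity function `E`) on vertices
`{0,...,n}`, rooted at `0`: every non-root vertex of the subtree has a unique
outgoing edge (its parent together with the index of a parallel edge), and
iterating parents reaches the root. -/
structure Subtree (n : ℕ) (E : Fin (n+1) → Fin (n+1) → ℕ) where
  par : Fin (n+1) → Option (Fin (n+1) × ℕ)
  root_par : par 0 = none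
  edge_valid : ∀ v p k, par v = some (p, k) → k < E v p
  parent_mem : ∀ v p k, par v = some (p, k) → p = 0 ∨ (par p).isSome
  reaches : ∀ v, (par v).isSome →
    Relation.ReflTransGen (fun a c => ∃ k, par a = some (c, k)) v 0

noncomputable def Subtree.verts {n : ℕ} {E : Fin (n+1) → Fin (n+1) → ℕ}
    (t : Subtree n E) : Finset (Fin (n+1)) :=
  Finset.univ.filter (fun v => v = 0 ∨ (t.par v).isSome)

def Subtree.IsSubtreeOf {n : ℕ} {E : Fin (n+1) → Fin (n+1) → ℕ}
    (t T : Subtree n E) : Prop :=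
  ∀ v, (t.par v).isSome → t.par v = T.par v

def Subtree.IsSpanning {n : ℕ} {E : Fin (n+1) → Fin (n+1) → ℕ}
    (T : Subtree n E) : Prop :=
  ∀ v, v ∈ T.verts

/-- `b` is a `G`-parking function: for every non-empty set `U` of non-root
vertices there is `j ∈ U` with more than `b j` edges from `j` to the
complement of `U`. (The value `b 0` at the root is irrelevant.) -/
def IsParking {n : ℕ} (E : Fin (n+1) → Fin (n+1) → ℕ) (b : Fin (n+1) → ℕ) : Prop :=
  ∀ U : Finset (Fin (n+1)), U.Nonempty → 0 ∉ U → ∃ j ∈ U, b j < ∑ i ∈ Uᶜ, E j i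

/-- An assignment of a relation on vertices to every rooted subtree. -/
structure TreeOrders (n : ℕ) (E : Fin (n+1) → Fin (n+1) → ℕ) where
  lt : Subtree n E → Fin (n+1) → Fin (n+1) → Prop

/-- A proper set of tree orders: each `lt T` is a strict total order on the
vertices of `T`, parents are smaller than children, and the orders are
consistent under restriction to rooted subtrees. -/
def TreeOrders.Proper {n : ℕ} {E : Fin (n+1) → Fin (n+1) → ℕ}
    (P : TreeOrders n E) : Prop :=
  (∀ T : Subtree n E, ∀ i ∈ T.verts, ¬ P.lt T i i) ∧
  (∀ T : Subtree n E, ∀ i ∈ T.verts, ∀ j ∈ T.verts, ∀ l ∈ T.verts,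
     P.lt T i j → P.lt T j l → P.lt T i l) ∧
  (∀ T : Subtree n E, ∀ i ∈ T.verts, ∀ j ∈ T.verts, i ≠ j → P.lt T i j ∨ P.lt T j i) ∧
  (∀ T : Subtree n E, ∀ j q k, T.par j = some (q, k) → P.lt T q j) ∧
  (∀ t T : Subtree n E, t.IsSubtreeOf T →
     ∀ i ∈ t.verts, ∀ j ∈ t.verts, (P.lt t i j ↔ P.lt T i j))

/-- The number of edges out of `j` that are smaller (w.r.t. the order `lt` on
targets, parallel edges broken by their index) than the edge `(j,q)` with
parallel index `k`. -/
noncomputable def thetaVal {n : ℕ} (E : Fin (n+1) → Fin (n+1) → ℕ)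
    (lt : Fin (n+1) → Fin (n+1) → Prop) (j q : Fin (n+1)) (k : ℕ) : ℕ :=
  (∑ i ∈ Finset.univ.filter (fun i => lt i q), E j i) + k

/-- The map Θ: given a tree order assignment, send a tree to the tuple whose
`j`-th entry counts the edges out of `j` smaller than the tree edge out of `j`. -/
noncomputable def Theta {n : ℕ} (E : Fin (n+1) → Fin (n+1) → ℕ)
    (P : TreeOrders n E) (T : Subtree n E) : Fin (n+1) → ℕ :=
  fun j => match T.par j with
  | none => 0
  | some (q, k) => thetaVal E (P.lt T) j q k

/-- `(q,k)` is the edge from `j` into the vertex set `S` such that exactly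
`bj` edges from `j` into `S` are smaller than it (w.r.t. `lt`, parallel edges
broken by index). -/
def ChosenEdge {n : ℕ} (E : Fin (n+1) → Fin (n+1) → ℕ) (S : Finset (Fin (n+1)))
    (lt : Fin (n+1) → Fin (n+1) → Prop) (bj : ℕ) (j q : Fin (n+1)) (k : ℕ) : Prop :=
  q ∈ S ∧ k < E j q ∧ (∑ i ∈ S.filter (fun i => lt i q), E j i) + k = bj

/-- A run of the inductive construction of Φ(b): start with the tree on the
root alone; at step `m` consider the set `V_m` of vertices `j` outside
`t (m-1)` with at least `b j + 1` edges into `t (m-1)`, adjoin all of them by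
their chosen edges to form an auxiliary tree, and let `p m` be the smallest
vertex of `V_m` in the order of that auxiliary tree; `t m` is `t (m-1)` with
`p m` adjoined by its chosen edge. -/
structure PhiRun {n : ℕ} (E : Fin (n+1) → Fin (n+1) → ℕ) (P : TreeOrders n E)
    (b : Fin (n+1) → ℕ) where
  t : ℕ → Subtree n E
  p : ℕ → Fin (n+1)
  init : ∀ v, (t 0).par v = none
  p0 : p 0 = 0
  sub : ∀ m, 1 ≤ m → m ≤ n → (t (m-1)).IsSubtreeOf (t m)
  newvert : ∀ m, 1 ≤ m → m ≤ n → p m ∉ (t (m-1)).verts ∧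
      ∀ v, v ≠ p m → (t m).par v = (t (m-1)).par v
  eligible : ∀ m, 1 ≤ m → m ≤ n →
      b (p m) + 1 ≤ ∑ i ∈ (t (m-1)).verts, E (p m) i
  chosen : ∀ m, 1 ≤ m → m ≤ n → ∃ q k, (t m).par (p m) = some (q, k) ∧
      ChosenEdge E (t (m-1)).verts (P.lt (t (m-1))) (b (p m)) (p m) q k
  minimal : ∀ m, 1 ≤ m → m ≤ n → ∃ taux : Subtree n E,
      (t (m-1)).IsSubtreeOf taux ∧
      (∀ j, j ∈ taux.verts ↔ (j ∈ (t (m-1)).verts ∨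
          (j ∉ (t (m-1)).verts ∧ b j + 1 ≤ ∑ i ∈ (t (m-1)).verts, E j i))) ∧
      (∀ j, j ∉ (t (m-1)).verts → b j + 1 ≤ ∑ i ∈ (t (m-1)).verts, E j i →
        ∃ q k, taux.par j = some (q, k) ∧
          ChosenEdge E (t (m-1)).verts (P.lt (t (m-1))) (b j) j q k) ∧
      (∀ j, j ∉ (t (m-1)).verts → b j + 1 ≤ ∑ i ∈ (t (m-1)).verts, E j i →
        j ≠ p m → P.lt taux (p m) j)

section A
variable {n : ℕ} {E : Fin (n+1) → Fin (n+1) → ℕ}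

lemma aux_mem_verts_iff {t : Subtree n E} {v : Fin (n+1)} :
    v ∈ t.verts ↔ v = 0 ∨ (t.par v).isSome := by
  simp [Subtree.verts]

lemma aux_root_mem_verts (t : Subtree n E) : (0 : Fin (n+1)) ∈ t.verts :=
  aux_mem_verts_iff.2 (Or.inl rfl)

lemma aux_mem_verts_of_par {t : Subtree n E} {v q : Fin (n+1)} {k : ℕ}
    (h : t.par v = some (q, k)) : v ∈ t.verts :=
  aux_mem_verts_iff.2 (Or.inr (by simp [h]))

lemma aux_parent_mem_verts {t : Subtree n E} {v q : Fin (n+1)} {k : ℕ}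
    (h : t.par v = some (q, k)) : q ∈ t.verts := by
  rcases t.parent_mem v q k h with h0 | hs
  · exact h0 ▸ aux_root_mem_verts t
  · exact aux_mem_verts_iff.2 (Or.inr hs)

lemma aux_not_mem_verts_par {t : Subtree n E} {v : Fin (n+1)} (h : v ∉ t.verts) :
    t.par v = none := by
  rw [aux_mem_verts_iff] at h
  push_neg at h
  exact Option.not_isSome_iff_eq_none.1 h.2

lemma aux_sub_refl {n : ℕ} {E : Fin (n+1) → Fin (n+1) → ℕ} (t : Subtree n E) :
    t.IsSubtreeOf t := fun _ _ => rfl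

lemma aux_sub_trans {n : ℕ} {E : Fin (n+1) → Fin (n+1) → ℕ} {t t' t'' : Subtree n E}
    (h : t.IsSubtreeOf t') (h' : t'.IsSubtreeOf t'') : t.IsSubtreeOf t'' := by
  intro v hv
  rw [h v hv]
  exact h' v (by rw [← h v hv]; exact hv)

lemma aux_par_eq_of_sub {n : ℕ} {E : Fin (n+1) → Fin (n+1) → ℕ} {t T : Subtree n E}
    (h : t.IsSubtreeOf T) {v q : Fin (n+1)} {k : ℕ}
    (hv : t.par v = some (q, k)) : T.par v = some (q, k) := by
  rw [← h v (by simp [hv]), hv]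

lemma aux_verts_subset_of_sub {n : ℕ} {E : Fin (n+1) → Fin (n+1) → ℕ} {t T : Subtree n E}
    (h : t.IsSubtreeOf T) : t.verts ⊆ T.verts := by
  intro v hv
  rcases aux_mem_verts_iff.1 hv with h0 | hs
  · exact h0 ▸ aux_root_mem_verts T
  · exact aux_mem_verts_iff.2 (Or.inr (by rw [← h v hs]; exact hs))

/-- the root is the smallest vertex. -/
lemma aux_root_lt {P : TreeOrders n E} (hP : P.Proper) (T : Subtree n E)
    {v : Fin (n+1)} (hv : v ∈ T.verts) (h0 : v ≠ 0) : P.lt T 0 v := by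
  rcases aux_mem_verts_iff.1 hv with rfl | hs
  · exact absurd rfl h0
  suffices H : ∀ w, Relation.ReflTransGen (fun a c => ∃ k, T.par a = some (c, k)) w 0 →
      w ≠ 0 → P.lt T 0 w from H v (T.reaches v hs) h0
  intro w hreach
  induction hreach using Relation.ReflTransGen.head_induction_on with
  | refl => exact fun h => absurd rfl h
  | head hac hcb ih =>
      rename_i a c
      intro _
      obtain ⟨k, hk⟩ := hac
      have hca : P.lt T c a := hP.2.2.2.1 T a c k hk
      by_cases hc0 : c = 0
      · exact hc0 ▸ hca
      · exact hP.2.1 T 0 (aux_root_mem_verts T) c (aux_parent_mem_verts hk) a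
          (aux_mem_verts_of_par hk) (ih hc0) hca

lemma aux_lt_asymm {P : TreeOrders n E} (hP : P.Proper) {T : Subtree n E}
    {u w : Fin (n+1)} (hu : u ∈ T.verts) (hw : w ∈ T.verts)
    (h : P.lt T u w) : ¬ P.lt T w u := fun h' =>
  hP.1 T u hu (hP.2.1 T u hu w hw u hu h h')

/-- uniqueness of the chosen edge. -/
lemma aux_chosenEdge_unique {S : Finset (Fin (n+1))} {lt : Fin (n+1) → Fin (n+1) → Prop}
    (hirr : ∀ i ∈ S, ¬ lt i i)
    (htrans : ∀ i ∈ S, ∀ j ∈ S, ∀ l ∈ S, lt i j → lt j l → lt i l)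
    (htot : ∀ i ∈ S, ∀ j ∈ S, i ≠ j → lt i j ∨ lt j i)
    {bj : ℕ} {j q q' : Fin (n+1)} {k k' : ℕ}
    (h : ChosenEdge E S lt bj j q k) (h' : ChosenEdge E S lt bj j q' k') :
    q = q' ∧ k = k' := by
  obtain ⟨hqS, hk, hsum⟩ := h
  obtain ⟨hq'S, hk', hsum'⟩ := h'
  have key : ∀ (a b : Fin (n+1)) (ka kb : ℕ), a ∈ S → b ∈ S → ka < E j a →
      (∑ i ∈ S.filter (fun i => lt i a), E j i) + ka = bj →
      (∑ i ∈ S.filter (fun i => lt i b), E j i) + kb = bj →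
      lt a b → False := by
    intro a b ka kb haS hbS hka hsa hsb hab
    have hnot : a ∉ S.filter (fun i => lt i a) := by
      simp only [Finset.mem_filter]
      exact fun hh => hirr a haS hh.2
    have hsub : insert a (S.filter (fun i => lt i a)) ⊆ S.filter (fun i => lt i b) := by
      intro i hi
      rcases Finset.mem_insert.1 hi with rfl | hi
      · exact Finset.mem_filter.2 ⟨haS, hab⟩
      · obtain ⟨hiS, hia⟩ := Finset.mem_filter.1 hi
        exact Finset.mem_filter.2 ⟨hiS, htrans i hiS a haS b hbS hia hab⟩
    have h1 : ∑ i ∈ insert a (S.filter (fun i => lt i a)), E j i ≤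
        ∑ i ∈ S.filter (fun i => lt i b), E j i := Finset.sum_le_sum_of_subset hsub
    rw [Finset.sum_insert hnot] at h1
    omega
  by_cases hqq : q = q'
  · subst hqq
    exact ⟨rfl, by omega⟩
  · rcases htot q hqS q' hq'S hqq with hlt | hlt
    · exact absurd (key q q' k k' hqS hq'S hk hsum hsum' hlt) (fun h => h)
    · exact absurd (key q' q k' k hq'S hqS hk' hsum' hsum hlt) (fun h => h)

end A


section B
variable {n : ℕ} {E : Fin (n+1) → Fin (n+1) → ℕ}

/-- Extend a subtree by a new leaf `j` attached to `q ∈ t.verts` via the `k`-th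
parallel edge. -/
noncomputable def Subtree.extend (t : Subtree n E) (j q : Fin (n+1)) (k : ℕ)
    (hk : k < E j q) (hq : q ∈ t.verts) (hj : j ∉ t.verts) : Subtree n E where
  par := Function.update t.par j (some (q, k))
  root_par := by
    have hj0 : j ≠ 0 := fun h => hj (h ▸ aux_root_mem_verts t)
    rw [Function.update_of_ne (Ne.symm hj0), t.root_par]
  edge_valid := by
    intro v p k' hv
    by_cases hvj : v = j
    · subst hvj
      rw [Function.update_self] at hv
      cases hv
      exact hk
    · rw [Function.update_of_ne hvj] at hv
      exact t.edge_valid v p k' hv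
  parent_mem := by
    have hparj : t.par j = none := aux_not_mem_verts_par hj
    intro v p k' hv
    by_cases hvj : v = j
    · rw [hvj, Function.update_self] at hv
      cases hv
      rcases aux_mem_verts_iff.1 hq with h0 | hs
      · exact Or.inl h0
      · refine Or.inr ?_
        have hqj : q ≠ j := fun h => by rw [h, hparj] at hs; simp at hs
        rw [Function.update_of_ne hqj]
        exact hs
    · rw [Function.update_of_ne hvj] at hv
      rcases t.parent_mem v p k' hv with h0 | hs
      · exact Or.inl h0
      · refine Or.inr ?_
        have hpj : p ≠ j := fun h => by rw [h, hparj] at hs; simp at hs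
        rw [Function.update_of_ne hpj]
        exact hs
  reaches := by
    have hparj : t.par j = none := aux_not_mem_verts_par hj
    have hmono : ∀ a c : Fin (n+1), (∃ k'', t.par a = some (c, k'')) →
        (∃ k'', Function.update t.par j (some (q, k)) a = some (c, k'')) := by
      intro a c ⟨k'', hk''⟩
      have haj : a ≠ j := fun h => by rw [h, hparj] at hk''; simp at hk''
      exact ⟨k'', by rw [Function.update_of_ne haj]; exact hk''⟩
    have hlift : ∀ a : Fin (n+1),
        Relation.ReflTransGen (fun a c => ∃ k'', t.par a = some (c, k'')) a 0 →
        Relation.ReflTransGen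
          (fun a c => ∃ k'', Function.update t.par j (some (q, k)) a = some (c, k'')) a 0 :=
      fun a h => Relation.ReflTransGen.mono hmono _ _ h
    intro v hv
    by_cases hvj : v = j
    · subst hvj
      have hstep : ∃ k'', Function.update t.par v (some (q, k)) v = some (q, k'') :=
        ⟨k, Function.update_self ..⟩
      rcases aux_mem_verts_iff.1 hq with h0 | hs
      · subst h0
        exact Relation.ReflTransGen.single hstep
      · exact Relation.ReflTransGen.head hstep (hlift q (t.reaches q hs))
    · rw [Function.update_of_ne hvj] at hv
      exact hlift v (t.reaches v hv)

lemma aux_extend_par_self {t : Subtree n E} {j q : Fin (n+1)} {k : ℕ}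
    {hk : k < E j q} {hq : q ∈ t.verts} {hj : j ∉ t.verts} :
    (t.extend j q k hk hq hj).par j = some (q, k) := Function.update_self ..

lemma aux_extend_par_other {t : Subtree n E} {j q : Fin (n+1)} {k : ℕ}
    {hk : k < E j q} {hq : q ∈ t.verts} {hj : j ∉ t.verts} {v : Fin (n+1)} (h : v ≠ j) :
    (t.extend j q k hk hq hj).par v = t.par v := Function.update_of_ne h ..

lemma aux_extend_sub {t X : Subtree n E} {j q : Fin (n+1)} {k : ℕ}
    {hk : k < E j q} {hq : q ∈ t.verts} {hj : j ∉ t.verts}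
    (hTX : t.IsSubtreeOf X) (hXj : X.par j = some (q, k)) :
    (t.extend j q k hk hq hj).IsSubtreeOf X := by
  intro v hv
  by_cases hvj : v = j
  · subst hvj
    rw [aux_extend_par_self, hXj]
  · rw [aux_extend_par_other hvj] at hv ⊢
    exact hTX v hv

end B


section Run
variable {n : ℕ} {E : Fin (n+1) → Fin (n+1) → ℕ} {P : TreeOrders n E} {b : Fin (n+1) → ℕ}

lemma aux_run_chain (r : PhiRun E P b) :
    ∀ l m, l ≤ m → m ≤ n → (r.t l).IsSubtreeOf (r.t m) := by
  intro l m hlm hmn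
  induction m with
  | zero =>
      obtain rfl : l = 0 := Nat.le_zero.1 hlm
      exact aux_sub_refl _
  | succ m ih =>
      rcases Nat.lt_or_ge l (m+1) with h | h
      · have hstep := r.sub (m+1) (Nat.succ_le_succ (Nat.zero_le m)) hmn
        simp only [Nat.add_sub_cancel] at hstep
        exact aux_sub_trans (ih (Nat.lt_succ_iff.1 h) (Nat.le_of_succ_le hmn)) hstep
      · obtain rfl : l = m + 1 := le_antisymm hlm h
        exact aux_sub_refl _

lemma aux_verts_zero (r : PhiRun E P b) : (r.t 0).verts = {0} := by
  ext v
  simp [aux_mem_verts_iff, r.init v]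

lemma aux_verts_step (r : PhiRun E P b) (m : ℕ) (h1 : 1 ≤ m) (h2 : m ≤ n) :
    (r.t m).verts = insert (r.p m) (r.t (m-1)).verts := by
  obtain ⟨q, k, hpar, -⟩ := r.chosen m h1 h2
  obtain ⟨hnew, hoth⟩ := r.newvert m h1 h2
  ext v
  by_cases hv : v = r.p m
  · subst hv
    simp [aux_mem_verts_iff, hpar]
  · simp [aux_mem_verts_iff, hoth v hv, hv]

lemma aux_verts_card (r : PhiRun E P b) : ∀ m, m ≤ n → (r.t m).verts.card = m + 1 := by
  intro m
  induction m with
  | zero => intro _; rw [aux_verts_zero r]; simp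
  | succ m ih =>
      intro h
      have h1 : 1 ≤ m + 1 := Nat.succ_le_succ (Nat.zero_le m)
      rw [aux_verts_step r (m+1) h1 h]
      simp only [Nat.add_sub_cancel]
      rw [Finset.card_insert_of_notMem (by
        have := (r.newvert (m+1) h1 h).1
        simpa using this)]
      rw [ih (Nat.le_of_succ_le h)]

lemma aux_spanning (r : PhiRun E P b) : (r.t n).IsSpanning := by
  have huniv : (r.t n).verts = Finset.univ := by
    apply Finset.eq_univ_of_card
    rw [aux_verts_card r n le_rfl]
    simp
  intro v
  rw [huniv]
  exact Finset.mem_univ v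

lemma aux_verts_char (r : PhiRun E P b) :
    ∀ m, m ≤ n → ∀ v, v ∈ (r.t m).verts ↔ v = 0 ∨ ∃ l, 1 ≤ l ∧ l ≤ m ∧ v = r.p l := by
  intro m
  induction m with
  | zero =>
      intro _ v
      rw [aux_verts_zero r]
      simp only [Finset.mem_singleton]
      constructor
      · exact fun h => Or.inl h
      · rintro (h | ⟨l, hl1, hl0, -⟩)
        · exact h
        · omega
  | succ m ih =>
      intro h v
      have h1 : 1 ≤ m + 1 := Nat.succ_le_succ (Nat.zero_le m)
      rw [aux_verts_step r (m+1) h1 h]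
      simp only [Nat.add_sub_cancel, Finset.mem_insert]
      rw [ih (Nat.le_of_succ_le h) v]
      constructor
      · rintro (hv | hv | ⟨l, hl1, hlm, hv⟩)
        · exact Or.inr ⟨m+1, h1, le_rfl, hv⟩
        · exact Or.inl hv
        · exact Or.inr ⟨l, hl1, Nat.le_succ_of_le hlm, hv⟩
      · rintro (hv | ⟨l, hl1, hlm, hv⟩)
        · exact Or.inr (Or.inl hv)
        · rcases Nat.lt_or_ge l (m+1) with hl | hl
          · exact Or.inr (Or.inr ⟨l, hl1, Nat.lt_succ_iff.1 hl, hv⟩)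
          · obtain rfl : l = m + 1 := le_antisymm hlm hl
            exact Or.inl hv

end Run


section Key
variable {n : ℕ} {E : Fin (n+1) → Fin (n+1) → ℕ} {P : TreeOrders n E} {b : Fin (n+1) → ℕ}

lemma aux_keyQ (hP : P.Proper) (r : PhiRun E P b) :
    ∀ m, 1 ≤ m → m ≤ n → ∀ v ∈ (r.t (m-1)).verts, P.lt (r.t n) v (r.p m) := by
  intro m
  induction m using Nat.strong_induction_on with
  | _ m IH =>
  intro h1 h2 v hv
  have hspan := aux_spanning r
  have hm1n : m - 1 ≤ n := by omega
  set j := r.p m with hjdef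
  have hjnot : j ∉ (r.t (m-1)).verts := (r.newvert m h1 h2).1
  have hj0 : j ≠ 0 := fun h => hjnot (h ▸ aux_root_mem_verts _)
  obtain ⟨q, k, hparm, hcem⟩ := r.chosen m h1 h2
  have hpartn : (r.t n).par j = some (q, k) :=
    aux_par_eq_of_sub (aux_run_chain r m n h2 le_rfl) hparm
  have hqj : P.lt (r.t n) q j := hP.2.2.2.1 (r.t n) j q k hpartn
  have hqS : q ∈ (r.t (m-1)).verts := hcem.1
  have consist : ∀ l, l ≤ n → ∀ u w, u ∈ (r.t l).verts → w ∈ (r.t l).verts →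
      (P.lt (r.t l) u w ↔ P.lt (r.t n) u w) := fun l hl u w hu hw =>
    hP.2.2.2.2 (r.t l) (r.t n) (aux_run_chain r l n hl le_rfl) u hu w hw
  have transn : ∀ a c d : Fin (n+1), P.lt (r.t n) a c → P.lt (r.t n) c d →
      P.lt (r.t n) a d :=
    fun a c d => hP.2.1 (r.t n) a (hspan a) c (hspan c) d (hspan d)
  by_cases hv0 : v = 0
  · subst hv0
    exact aux_root_lt hP (r.t n) (hspan j) hj0
  obtain (h0 | ⟨l, hl1, hlm, rfl⟩) := (aux_verts_char r (m-1) hm1n v).1 hv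
  · exact absurd h0 hv0
  have hln : l ≤ n := by omega
  have hl1n : l - 1 ≤ n := by omega
  have hjl : j ∉ (r.t (l-1)).verts := fun h =>
    hjnot (aux_verts_subset_of_sub (aux_run_chain r (l-1) (m-1) (by omega) hm1n) h)
  by_cases helig : b j + 1 ≤ ∑ i ∈ (r.t (l-1)).verts, E j i
  · -- j was already eligible when `p l` was added
    obtain ⟨taux, htaux_sub, htaux_verts, htaux_chosen, htaux_min⟩ := r.minimal l hl1 hln
    obtain ⟨q2, k2, htauxj, hcel⟩ := htaux_chosen j hjl helig
    have hne : j ≠ r.p l := fun h => hjnot (h ▸ hv)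
    have hmin : P.lt taux (r.p l) j := htaux_min j hjl helig hne
    have hq2S : q2 ∈ (r.t (l-1)).verts := hcel.1
    have hq2Sm : q2 ∈ (r.t (m-1)).verts :=
      aux_verts_subset_of_sub (aux_run_chain r (l-1) (m-1) (by omega) hm1n) hq2S
    -- the chosen edge of `j` at step `l` is still chosen at step `m`
    have hfilt : (r.t (m-1)).verts.filter (fun i => P.lt (r.t (m-1)) i q2)
        = (r.t (l-1)).verts.filter (fun i => P.lt (r.t (l-1)) i q2) := by
      ext i
      simp only [Finset.mem_filter]
      constructor
      · rintro ⟨hiS, hilt⟩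
        have hitn : P.lt (r.t n) i q2 := (consist (m-1) hm1n i q2 hiS hq2Sm).1 hilt
        have hiSl : i ∈ (r.t (l-1)).verts := by
          by_contra hc
          obtain (rfl | ⟨l2, hl21, hl2m, rfl⟩) := (aux_verts_char r (m-1) hm1n i).1 hiS
          · exact hc (aux_root_mem_verts _)
          · have hll2 : l ≤ l2 := by
              by_contra hc2
              exact hc ((aux_verts_char r (l-1) hl1n _).2 (Or.inr ⟨l2, hl21, by omega, rfl⟩))
            have hq2l2 : q2 ∈ (r.t (l2-1)).verts :=
              aux_verts_subset_of_sub
                (aux_run_chain r (l-1) (l2-1) (by omega) (by omega)) hq2S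
            have hkey := IH l2 (by omega) hl21 (by omega) q2 hq2l2
            exact aux_lt_asymm hP (hspan q2) (hspan _) hkey hitn
        exact ⟨hiSl, (consist (l-1) hl1n i q2 hiSl hq2S).2 hitn⟩
      · rintro ⟨hiSl, hilt⟩
        have hiS : i ∈ (r.t (m-1)).verts :=
          aux_verts_subset_of_sub (aux_run_chain r (l-1) (m-1) (by omega) hm1n) hiSl
        have hitn : P.lt (r.t n) i q2 := (consist (l-1) hl1n i q2 hiSl hq2S).1 hilt
        exact ⟨hiS, (consist (m-1) hm1n i q2 hiS hq2Sm).2 hitn⟩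
    have hcem2 : ChosenEdge E (r.t (m-1)).verts (P.lt (r.t (m-1))) (b j) j q2 k2 :=
      ⟨hq2Sm, hcel.2.1, by rw [hfilt]; exact hcel.2.2⟩
    obtain ⟨hqq2, hkk2⟩ := aux_chosenEdge_unique
      (hP.1 (r.t (m-1))) (hP.2.1 (r.t (m-1))) (hP.2.2.1 (r.t (m-1))) hcem hcem2
    have hpartn2 : (r.t n).par j = some (q2, k2) := by rw [hpartn, hqq2, hkk2]
    -- `t l` is a subtree of `taux`
    obtain ⟨q3, k3, hparl, hcel3⟩ := r.chosen l hl1 hln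
    obtain ⟨q4, k4, htauxpl, hcel4⟩ :=
      htaux_chosen (r.p l) (r.newvert l hl1 hln).1 (r.eligible l hl1 hln)
    obtain ⟨hq34, hk34⟩ := aux_chosenEdge_unique
      (hP.1 (r.t (l-1))) (hP.2.1 (r.t (l-1))) (hP.2.2.1 (r.t (l-1))) hcel3 hcel4
    have htl_taux : (r.t l).IsSubtreeOf taux := by
      intro w hw
      by_cases hwpl : w = r.p l
      · subst hwpl
        rw [hparl, htauxpl, hq34, hk34]
      · rw [(r.newvert l hl1 hln).2 w hwpl] at hw ⊢
        exact htaux_sub w hw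
    -- build the common subtree `s = t l + j`
    have hq2Sll : q2 ∈ (r.t l).verts :=
      aux_verts_subset_of_sub (aux_run_chain r (l-1) l (by omega) hln) hq2S
    have hjSl : j ∉ (r.t l).verts := fun h =>
      hjnot (aux_verts_subset_of_sub (aux_run_chain r l (m-1) (by omega) hm1n) h)
    set s := (r.t l).extend j q2 k2 hcel.2.1 hq2Sll hjSl with hsdef
    have hs_taux : s.IsSubtreeOf taux := by
      rw [hsdef]; exact aux_extend_sub htl_taux htauxj
    have hs_tn : s.IsSubtreeOf (r.t n) := by
      rw [hsdef]; exact aux_extend_sub (aux_run_chain r l n hln le_rfl) hpartn2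
    have hsj : s.par j = some (q2, k2) := by
      rw [hsdef]; exact aux_extend_par_self
    have hspl : s.par (r.p l) = some (q3, k3) := by
      rw [hsdef, aux_extend_par_other (Ne.symm hne), hparl]
    have hplmem : r.p l ∈ s.verts := aux_mem_verts_of_par hspl
    have hjmem : j ∈ s.verts := aux_mem_verts_of_par hsj
    have h5 : P.lt s (r.p l) j :=
      (hP.2.2.2.2 s taux hs_taux (r.p l) hplmem j hjmem).2 hmin
    exact (hP.2.2.2.2 s (r.t n) hs_tn (r.p l) hplmem j hjmem).1 h5
  · -- j was not yet eligible when `p l` was added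
    push_neg at helig
    obtain ⟨-, hkE, hsum⟩ := hcem
    rw [← hjdef] at hkE hsum
    have hqnotf : q ∉ (r.t (m-1)).verts.filter (fun i => P.lt (r.t (m-1)) i q) := by
      simp only [Finset.mem_filter]
      exact fun h => hP.1 (r.t (m-1)) q hqS h.2
    have hAsum : b j <
        ∑ i ∈ insert q ((r.t (m-1)).verts.filter (fun i => P.lt (r.t (m-1)) i q)), E j i := by
      rw [Finset.sum_insert hqnotf]
      omega
    have hex : ¬ (insert q ((r.t (m-1)).verts.filter (fun i => P.lt (r.t (m-1)) i q))
        ⊆ (r.t (l-1)).verts) := by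
      intro hsub
      have hle := Finset.sum_le_sum_of_subset (f := fun i => E j i) hsub
      omega
    obtain ⟨istar, histar, histarl⟩ := Finset.not_subset.1 hex
    have histarm : istar ∈ (r.t (m-1)).verts ∧ (P.lt (r.t (m-1)) istar q ∨ istar = q) := by
      rcases Finset.mem_insert.1 histar with rfl | hh
      · exact ⟨hqS, Or.inr rfl⟩
      · obtain ⟨ha, hb'⟩ := Finset.mem_filter.1 hh
        exact ⟨ha, Or.inl hb'⟩
    have histartn : P.lt (r.t n) istar q ∨ istar = q := by
      rcases histarm.2 with hh | hh
      · exact Or.inl ((consist (m-1) hm1n istar q histarm.1 hqS).1 hh)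
      · exact Or.inr hh
    obtain (rfl | ⟨l2, hl21, hl2m, histareq⟩) := (aux_verts_char r (m-1) hm1n istar).1 histarm.1
    · exact absurd (aux_root_mem_verts _) histarl
    have hll2 : l ≤ l2 := by
      by_contra hc
      exact histarl ((aux_verts_char r (l-1) hl1n _).2 (Or.inr ⟨l2, hl21, by omega, histareq⟩))
    rcases Nat.lt_or_ge l l2 with hl2 | hl2
    · have hvmem : r.p l ∈ (r.t (l2-1)).verts := by
        apply (aux_verts_char r (l2-1) (by omega) _).2
        exact Or.inr ⟨l, hl1, by omega, rfl⟩
      have hkey : P.lt (r.t n) (r.p l) istar := by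
        rw [histareq]
        exact IH l2 (by omega) hl21 (by omega) (r.p l) hvmem
      rcases histartn with hh | rfl
      · exact transn _ _ _ (transn _ _ _ hkey hh) hqj
      · exact transn _ _ _ hkey hqj
    · obtain rfl : l2 = l := le_antisymm hl2 hll2
      rw [histareq] at histartn
      rcases histartn with hh | hh
      · exact transn _ _ _ hh hqj
      · rw [hh]
        exact hqj

end Key

/-- Θ ∘ Φ = id: for any `G`-parking function `b` (with `b 0 = 0`), a run of
the construction Φ on `b` produces a spanning tree whose Θ-image is `b`. -/
theorem stmt_14 (n : ℕ) (E : Fin (n+1) → Fin (n+1) → ℕ)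
    (P : TreeOrders n E) (hP : P.Proper)
    (b : Fin (n+1) → ℕ) (hb : IsParking E b) (hb0 : b 0 = 0)
    (r : PhiRun E P b) :
    (r.t n).IsSpanning ∧ Theta E P (r.t n) = b := by
  refine ⟨aux_spanning r, ?_⟩
  funext j
  by_cases hj0 : j = 0
  · subst hj0
    simp [Theta, (r.t n).root_par, hb0]
  · have hjmem : j ∈ (r.t n).verts := aux_spanning r j
    obtain (h0 | ⟨m, hm1, hm2, hv⟩) := (aux_verts_char r n le_rfl j).1 hjmem
    · exact absurd h0 hj0
    subst hv
    obtain ⟨q, k, hparm, hce⟩ := r.chosen m hm1 hm2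
    have hpartn : (r.t n).par (r.p m) = some (q, k) :=
      aux_par_eq_of_sub (aux_run_chain r m n hm2 le_rfl) hparm
    have hqmem : q ∈ (r.t (m-1)).verts := hce.1
    have hm1n : m - 1 ≤ n := by omega
    have hchain := aux_run_chain r (m-1) n hm1n le_rfl
    have hsetseq : Finset.univ.filter (fun i => P.lt (r.t n) i q)
        = (r.t (m-1)).verts.filter (fun i => P.lt (r.t (m-1)) i q) := by
      ext i
      simp only [Finset.mem_filter, Finset.mem_univ, true_and]
      by_cases hiS : i ∈ (r.t (m-1)).verts
      · rw [← hP.2.2.2.2 (r.t (m-1)) (r.t n) hchain i hiS q (hqmem)]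
        exact ⟨fun h => ⟨hiS, h⟩, fun h => h.2⟩
      · constructor
        · intro hlt
          exfalso
          obtain (rfl | ⟨l, hl1, hln, rfl⟩) := (aux_verts_char r n le_rfl i).1 (aux_spanning r i)
          · exact hiS (aux_root_mem_verts _)
          · have hlm : m ≤ l := by
              by_contra hc
              exact hiS ((aux_verts_char r (m-1) hm1n _).2 (Or.inr ⟨l, hl1, by omega, rfl⟩))
            have hq2 : q ∈ (r.t (l-1)).verts :=
              aux_verts_subset_of_sub (aux_run_chain r (m-1) (l-1) (by omega) (by omega)) hqmem
            have hkey := aux_keyQ hP r l hl1 hln q hq2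
            exact aux_lt_asymm hP (aux_spanning r q) (aux_spanning r _) hkey hlt
        · intro h
          exact absurd h.1 hiS
    show Theta E P (r.t n) (r.p m) = b (r.p m)
    simp only [Theta]
    rw [hpartn]
    show thetaVal E (P.lt (r.t n)) (r.p m) q k = b (r.p m)
    unfold thetaVal
    rw [hsetseq]
    exact hce.2.2
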